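/- Ax–Katz over boxes: let p be prime, q = p^h, let 𝓑₁ ⊆ ℤ_q^n have q^n elements with 𝓑₁ mod p = 𝔽_q^n, and let f₁, …, f_s ∈ ℤ_q[x₁,…,x_n] be nonconstant. If V = {X ∈ 𝓑₁ : f₁(X) ≡ ⋯ ≡ f_s(X) ≡ 0 mod p}, then ord_q(|V|) ≥ ⌈(n − Σ_{k=1}^s deg f_k)/max_k deg f_k⌉*, where ⌈t⌉* is the least nonnegative integer ≥ t. -/

import Mathlib

namespace AxKatzAux

variable (p h : ℕ)

/-- fold of a digit list starting at rotation index `j`: digit `t` gets weight `p^((j+t) % h)`. -/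
def foldAux : ℕ → List ℕ → ℕ
  | _, [] => 0
  | j, d :: L => d * p ^ (j % h) + foldAux (j + 1) L

/-- the `j`-th folded digit sum of `e` in base `p`, folding exponents modulo `h`. -/
def fold (j e : ℕ) : ℕ := foldAux p h j (p.digits e)

/-- base-`p` digit sum -/
def sdig (e : ℕ) : ℕ := (p.digits e).sum

@[simp] lemma fold_zero (j : ℕ) : fold p h j 0 = 0 := by simp [fold, foldAux]

lemma fold_eq (hp : 1 < p) {e : ℕ} (he : 0 < e) (j : ℕ) :
    fold p h j e = e % p * p ^ (j % h) + fold p h (j + 1) (e / p) := by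
  rw [fold, Nat.digits_def' hp he]; rfl

@[simp] lemma sdig_zero : sdig p 0 = 0 := by simp [sdig]

lemma sdig_eq (hp : 1 < p) {e : ℕ} (he : 0 < e) : sdig p e = e % p + sdig p (e / p) := by
  rw [sdig, Nat.digits_def' hp he]; rfl

lemma fold_pos (hp : 1 < p) : ∀ {e : ℕ}, 0 < e → ∀ j, 0 < fold p h j e := by
  intro e
  induction e using Nat.strong_induction_on with
  | _ e ih =>
    intro he j
    rw [fold_eq p h hp he]
    rcases Nat.eq_zero_or_pos (e % p) with h0 | h0
    · have hd : 0 < e / p := Nat.div_pos (Nat.le_of_dvd he (Nat.dvd_of_mod_eq_zero h0))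
        (by omega)
      have := ih (e / p) (Nat.div_lt_self he hp) hd (j + 1)
      omega
    · have : 0 < e % p * p ^ (j % h) := Nat.mul_pos h0 (Nat.pow_pos (by omega))
      omega

lemma succ_mod_le (j : ℕ) : (j + 1) % h ≤ j % h + 1 := by
  calc (j + 1) % h = (j % h + 1 % h) % h := by rw [Nat.add_mod]
  _ ≤ j % h + 1 % h := Nat.mod_le _ _
  _ ≤ j % h + 1 := by have := Nat.mod_le 1 h; omega

lemma fold_add (hp : 1 < p) (a b j : ℕ) :
    fold p h j (a + b) ≤ fold p h j a + fold p h j b := by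
  set N := a + b with hN
  clear_value N
  induction N using Nat.strong_induction_on generalizing a b j with
  | _ N ih =>
    subst hN
    rcases Nat.eq_zero_or_pos a with rfl | ha
    · simp
    rcases Nat.eq_zero_or_pos b with rfl | hb
    · simp
    have hab : 0 < a + b := by omega
    have hp0 : 0 < p := by omega
    have hda : p * (a / p) + a % p = a := Nat.div_add_mod a p
    have hdb : p * (b / p) + b % p = b := Nat.div_add_mod b p
    have hma : a % p < p := Nat.mod_lt _ hp0
    have hmb : b % p < p := Nat.mod_lt _ hp0
    have h2a : 2 * (a / p) ≤ p * (a / p) := Nat.mul_le_mul_right _ (by omega)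
    have h2b : 2 * (b / p) ≤ p * (b / p) := Nat.mul_le_mul_right _ (by omega)
    rw [fold_eq p h hp hab, fold_eq p h hp ha, fold_eq p h hp hb]
    rw [Nat.add_mod a b p, Nat.add_div hp0]
    set w := p ^ (j % h) with hw
    have hwpos : 0 < w := Nat.pow_pos hp0
    by_cases hc : p ≤ a % p + b % p
    · -- carry case
      have hm : (a % p + b % p) % p = a % p + b % p - p := by
        have hlt : a % p + b % p - p < p := by omega
        have heq : a % p + b % p = (a % p + b % p - p) + 1 * p := by omega
        rw [heq, Nat.add_mul_mod_self_right, Nat.mod_eq_of_lt hlt]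
        omega
      rw [hm, if_pos hc]
      have hsz : a / p + b / p + 1 < a + b := by omega
      have i1 : fold p h (j+1) (a / p + b / p + 1) ≤
          fold p h (j+1) (a / p + b / p) + fold p h (j+1) 1 :=
        ih _ hsz _ _ _ rfl
      have i2 : fold p h (j+1) (a / p + b / p) ≤
          fold p h (j+1) (a/p) + fold p h (j+1) (b/p) := by
        rcases Nat.eq_zero_or_pos (a / p + b / p) with hz | hz
        · have hza : a / p = 0 := by omega
          have hzb : b / p = 0 := by omega
          rw [hz, hza, hzb]
          simp
        · exact ih _ (by omega) _ _ _ rfl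
      have hf1 : fold p h (j+1) 1 = p ^ ((j+1) % h) := by
        rw [fold_eq p h hp (by omega)]
        rw [Nat.mod_eq_of_lt hp, Nat.div_eq_of_lt hp]
        simp
      have hpow : p ^ ((j+1) % h) ≤ p * w := by
        rw [hw]
        calc p ^ ((j+1) % h) ≤ p ^ (j % h + 1) :=
          Nat.pow_le_pow_right (by omega) (succ_mod_le h j)
        _ = p * p ^ (j % h) := by ring
      have key : (a % p + b % p - p) * w + p * w = (a % p) * w + (b % p) * w := by
        rw [← Nat.add_mul, ← Nat.add_mul]
        congr 1
        omega
      rw [hf1] at i1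
      omega
    · -- no carry
      have hm : (a % p + b % p) % p = a % p + b % p := Nat.mod_eq_of_lt (by omega)
      rw [hm, if_neg hc]
      simp only [Nat.add_zero]
      have i2 : fold p h (j+1) (a / p + b / p) ≤
          fold p h (j+1) (a/p) + fold p h (j+1) (b/p) := by
        rcases Nat.eq_zero_or_pos (a / p + b / p) with hz | hz
        · have hza : a / p = 0 := by omega
          have hzb : b / p = 0 := by omega
          rw [hz, hza, hzb]
          simp
        · have hsz : a / p + b / p < a + b := by omega
          exact ih _ hsz _ _ _ rfl
      have key : (a % p + b % p) * w = a % p * w + b % p * w := Nat.add_mul _ _ _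
      omega

lemma fold_mul (hp : 1 < p) (c e j : ℕ) : fold p h j (c * e) ≤ c * fold p h j e := by
  induction c with
  | zero => simp
  | succ c ih =>
    have : (c + 1) * e = c * e + e := by ring
    rw [this]
    calc fold p h j (c * e + e) ≤ fold p h j (c * e) + fold p h j e := fold_add p h hp _ _ _
    _ ≤ c * fold p h j e + fold p h j e := by omega
    _ = (c + 1) * fold p h j e := by ring

lemma pow_mod_cycle (hp : 1 < p) (j : ℕ) : p ^ j ≡ p ^ (j % h) [MOD p ^ h - 1] := by
  conv_lhs => rw [← Nat.div_add_mod j h]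
  rw [pow_add, pow_mul]
  have hq : 1 ≤ p ^ h := Nat.one_le_pow _ _ (by omega)
  have h1 : p ^ h ≡ 1 [MOD p ^ h - 1] := ((Nat.modEq_iff_dvd' hq).mpr dvd_rfl).symm
  calc (p ^ h) ^ (j / h) * p ^ (j % h) ≡ 1 ^ (j / h) * p ^ (j % h) [MOD p ^ h - 1] :=
    (h1.pow _).mul_right _
  _ = p ^ (j % h) := by ring

lemma fold_modeq (hp : 1 < p) : ∀ e j, fold p h j e ≡ p ^ j * e [MOD p ^ h - 1] := by
  intro e
  induction e using Nat.strong_induction_on with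
  | _ e ih =>
    intro j
    rcases Nat.eq_zero_or_pos e with rfl | he
    · simp [Nat.ModEq]
    rw [fold_eq p h hp he]
    have h1 : fold p h (j+1) (e / p) ≡ p ^ (j+1) * (e / p) [MOD p ^ h - 1] :=
      ih _ (Nat.div_lt_self he hp) _
    have h2 : e % p * p ^ (j % h) ≡ e % p * p ^ j [MOD p ^ h - 1] :=
      (pow_mod_cycle p h hp j).symm.mul_left _
    have h3 : e % p * p ^ j + p ^ (j+1) * (e / p) = p ^ j * e := by
      conv_rhs => rw [← Nat.div_add_mod e p]
      ring
    calc e % p * p ^ (j % h) + fold p h (j+1) (e / p)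
        ≡ e % p * p ^ j + p ^ (j+1) * (e / p) [MOD p ^ h - 1] := h2.add h1
    _ = p ^ j * e := h3

lemma fold_period (j e : ℕ) : fold p h (j + h) e = fold p h j e := by
  rw [fold, fold]
  generalize (p.digits e) = L
  induction L generalizing j with
  | nil => rfl
  | cons d L ih =>
    simp only [foldAux, Nat.add_mod_right]
    rw [show j + h + 1 = (j + 1) + h by ring, ih]

lemma geom_nat (hp : 1 < p) : ∀ h : ℕ, (p - 1) * ∑ j ∈ Finset.range h, p ^ j = p ^ h - 1 := by
  intro h
  induction h with
  | zero => simp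
  | succ h ih =>
    rw [Finset.sum_range_succ, Nat.mul_add, ih]
    have h1 : 1 ≤ p ^ h := Nat.one_le_pow _ _ (by omega)
    have h2 : p ^ (h+1) = p * p ^ h := by ring
    have h3 : (p - 1) * p ^ h + p ^ h = p * p ^ h := by
      have : p - 1 + 1 = p := by omega
      calc (p - 1) * p ^ h + p ^ h = (p - 1 + 1) * p ^ h := by ring
      _ = p * p ^ h := by rw [this]
    omega

lemma sum_fold (hp : 1 < p) (hh : 0 < h) :
    ∀ e, (p - 1) * ∑ j ∈ Finset.range h, fold p h j e = (p ^ h - 1) * sdig p e := by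
  intro e
  induction e using Nat.strong_induction_on with
  | _ e ih =>
    rcases Nat.eq_zero_or_pos e with rfl | he
    · simp
    have shift : ∑ j ∈ Finset.range h, fold p h (j + 1) (e / p)
        = ∑ j ∈ Finset.range h, fold p h j (e / p) := by
      have h1 : ∑ j ∈ Finset.range (h + 1), fold p h j (e / p)
          = ∑ j ∈ Finset.range h, fold p h (j + 1) (e / p) + fold p h 0 (e / p) :=
        Finset.sum_range_succ' _ _
      have h2 : ∑ j ∈ Finset.range (h + 1), fold p h j (e / p)
          = ∑ j ∈ Finset.range h, fold p h j (e / p) + fold p h h (e / p) :=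
        Finset.sum_range_succ _ _
      have h3 : fold p h h (e / p) = fold p h 0 (e / p) := by
        have := fold_period p h 0 (e / p); simpa using this
      omega
    have expand : ∑ j ∈ Finset.range h, fold p h j e
        = e % p * ∑ j ∈ Finset.range h, p ^ j + ∑ j ∈ Finset.range h, fold p h j (e / p) := by
      rw [← shift, Finset.mul_sum, ← Finset.sum_add_distrib]
      refine Finset.sum_congr rfl fun j hj => ?_
      rw [fold_eq p h hp he, Nat.mod_eq_of_lt (Finset.mem_range.mp hj)]
    rw [expand, Nat.mul_add, ih (e / p) (Nat.div_lt_self he hp),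
      sdig_eq p hp he, Nat.mul_add]
    congr 1
    rw [← Nat.mul_assoc, Nat.mul_comm (p-1) (e % p), Nat.mul_assoc, geom_nat p hp,
      Nat.mul_comm]

lemma sdig_q_sub_one (hp : 1 < p) : ∀ h : ℕ, sdig p (p ^ h - 1) = h * (p - 1) := by
  intro h
  induction h with
  | zero => simp
  | succ h ih =>
    have hP : 1 ≤ p ^ h := Nat.one_le_pow _ _ (by omega)
    have hps : p ≤ p ^ (h+1) := Nat.le_self_pow (by omega) p
    have he : 0 < p ^ (h+1) - 1 := by omega
    have key : p ^ (h+1) - 1 = (p - 1) + (p ^ h - 1) * p := by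
      have : p ^ (h+1) = p ^ h * p := by ring
      have h2 : (p ^ h - 1) * p = p ^ h * p - p := by
        rw [Nat.sub_mul, Nat.one_mul]
      have h3 : p ≤ p ^ h * p := Nat.le_mul_of_pos_left _ hP
      omega
    rw [sdig_eq p hp he, key]
    rw [Nat.add_mul_mod_self_right, Nat.add_mul_div_right _ _ (show 0 < p by omega)]
    rw [Nat.mod_eq_of_lt (by omega), Nat.div_eq_of_lt (by omega)]
    rw [Nat.zero_add, ih]
    ring

lemma sdig_mul_p_pow (hp : 1 < p) (e m : ℕ) : sdig p (e * p ^ m) = sdig p e := by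
  induction m with
  | zero => simp
  | succ m ih =>
    rcases Nat.eq_zero_or_pos e with rfl | he
    · simp
    have h1 : e * p ^ (m+1) = (e * p ^ m) * p := by ring
    have h2 : 0 < e * p ^ m := Nat.mul_pos he (Nat.pow_pos (by omega))
    rw [h1, sdig_eq p hp (by positivity), Nat.mul_mod_left, Nat.mul_div_cancel _ (by omega : 0 < p), Nat.zero_add, ih]

lemma sdig_le (e : ℕ) : sdig p e ≤ e := Nat.digit_sum_le p e


section Core

variable {p : ℕ} [hp : Fact p.Prime]

lemma fold_sum_le (h : ℕ) {α : Type*} (s : Finset α) (f : α → ℕ) (j : ℕ) :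
    fold p h j (∑ x ∈ s, f x) ≤ ∑ x ∈ s, fold p h j (f x) := by
  classical
  induction s using Finset.cons_induction with
  | empty => simp
  | cons a s ha ih =>
    rw [Finset.sum_cons, Finset.sum_cons]
    calc fold p h j (f a + ∑ x ∈ s, f x) ≤ fold p h j (f a) + fold p h j (∑ x ∈ s, f x) :=
      fold_add p h hp.out.one_lt _ _ _
    _ ≤ fold p h j (f a) + ∑ x ∈ s, fold p h j (f x) := by omega

lemma modeq_sum {α : Type*} (s : Finset α) (f g : α → ℕ) (N : ℕ)
    (hfg : ∀ x ∈ s, f x ≡ g x [MOD N]) : ∑ x ∈ s, f x ≡ ∑ x ∈ s, g x [MOD N] := by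
  classical
  induction s using Finset.cons_induction with
  | empty => simp [Nat.ModEq.refl]
  | cons a s ha ih =>
    rw [Finset.sum_cons, Finset.sum_cons]
    exact (hfg a (Finset.mem_cons_self _ _)).add
      (ih fun x hx => hfg x (Finset.mem_cons_of_mem hx))

lemma padicValNat_prod {α : Type*} (s : Finset α) (f : α → ℕ) (hf : ∀ x ∈ s, f x ≠ 0) :
    padicValNat p (∏ x ∈ s, f x) = ∑ x ∈ s, padicValNat p (f x) := by
  classical
  induction s using Finset.cons_induction with
  | empty => simp
  | cons a s ha ih =>
    rw [Finset.prod_cons, Finset.sum_cons,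
      padicValNat.mul (hf a (Finset.mem_cons_self _ _))
        (Finset.prod_ne_zero_iff.mpr fun x hx => hf x (Finset.mem_cons_of_mem hx)),
      ih fun x hx => hf x (Finset.mem_cons_of_mem hx)]

lemma legendre_int (e : ℕ) :
    ((p : ℤ) - 1) * padicValNat p (Nat.factorial e) = (e : ℤ) - sdig p e := by
  have h1 : (p - 1) * padicValNat p (Nat.factorial e) = e - sdig p e :=
    sub_one_mul_padicValNat_factorial e
  have h2 : sdig p e ≤ e := sdig_le p e
  have h3 : 1 ≤ p := hp.out.one_lt.le
  have h4 : (((p - 1) * padicValNat p (Nat.factorial e) : ℕ) : ℤ) = ((e - sdig p e : ℕ) : ℤ) := by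
    exact_mod_cast congrArg (fun x : ℕ => (x : ℤ)) h1
  rw [Nat.cast_mul, Nat.cast_sub h2, Nat.cast_sub h3] at h4
  simpa using h4

lemma valuation_multinomial {α : Type*} (s : Finset α) (f : α → ℕ) :
    ((p : ℤ) - 1) * padicValNat p (Nat.multinomial s f) =
      (∑ v ∈ s, (sdig p (f v) : ℤ)) - sdig p (∑ v ∈ s, f v) := by
  classical
  have spec := Nat.multinomial_spec s f
  have hfacne : ∀ x ∈ s, Nat.factorial (f x) ≠ 0 := fun x _ => (Nat.factorial_pos _).ne'
  have hprodne : (∏ x ∈ s, Nat.factorial (f x)) ≠ 0 :=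
    Finset.prod_ne_zero_iff.mpr hfacne
  have hmultne : Nat.multinomial s f ≠ 0 := (Nat.multinomial_pos s f).ne'
  have hval : padicValNat p (∏ x ∈ s, Nat.factorial (f x)) + padicValNat p (Nat.multinomial s f)
      = padicValNat p (Nat.factorial (∑ v ∈ s, f v)) := by
    rw [← padicValNat.mul hprodne hmultne, spec]
  rw [padicValNat_prod s _ hfacne] at hval
  have hcast := congrArg (fun x : ℕ => ((p : ℤ) - 1) * (x : ℤ)) hval
  simp only [Nat.cast_add, Nat.cast_sum, mul_add] at hcast
  rw [legendre_int (∑ v ∈ s, f v)] at hcast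
  have hsum : ((p : ℤ) - 1) * ∑ x ∈ s, (padicValNat p (Nat.factorial (f x)) : ℤ)
      = ∑ x ∈ s, (((f x : ℤ)) - sdig p (f x)) := by
    rw [Finset.mul_sum]
    exact Finset.sum_congr rfl fun x _ => legendre_int (f x)
  rw [hsum] at hcast
  have hfs : (∑ x ∈ s, (((f x : ℤ)) - sdig p (f x)))
      = (∑ x ∈ s, (f x : ℤ)) - ∑ x ∈ s, (sdig p (f x) : ℤ) := Finset.sum_sub_distrib _ _
  rw [hfs] at hcast
  push_cast at hcast ⊢
  linarith [hcast]

/-- The core combinatorial estimate in Wan's elementary proof of the Ax–Katz theorem. -/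
lemma core_estimate {h n s m : ℕ} (hh : 0 < h)
    (S : Finset (Fin s))
    (V : Fin s → Finset (Fin n →₀ ℕ))
    (d : Fin s → ℕ) (dmax : ℕ) (hd : ∀ k, d k ≤ dmax) (hdmax : 0 < dmax)
    (e : Fin s → (Fin n →₀ ℕ) → ℕ)
    (hsum : ∀ k ∈ S, ∑ v ∈ V k, e k v = (p ^ h - 1) * p ^ m)
    (hdeg : ∀ k ∈ S, ∀ v ∈ V k, (∑ i, v i) ≤ d k)
    (u : Fin n → ℕ) (hu : ∀ i, u i = ∑ k ∈ S, ∑ v ∈ V k, e k v * v i)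
    (hdvd : ∀ i, (p ^ h - 1) ∣ u i)
    (μ : ℕ) (hμ : ∀ t : ℕ, (n : ℤ) - ∑ k, (d k : ℤ) ≤ (dmax : ℤ) * t → μ ≤ t) :
    (h * μ : ℤ) ≤ (∑ k ∈ S, (padicValNat p (Nat.multinomial (V k) (e k)) : ℤ))
      + h * (Finset.univ.filter (fun i => u i = 0)).card := by
  classical
  have hp1 : 1 < p := hp.out.one_lt
  set q1 := p ^ h - 1 with hq1def
  have hq : 2 ≤ p ^ h := by
    have h1 : p ^ 1 ≤ p ^ h := Nat.pow_le_pow_right (by omega) hh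
    have h2 : p ^ 1 = p := pow_one p
    omega
  have hq1 : 0 < q1 := by omega
  set z := (Finset.univ.filter (fun i : Fin n => u i = 0)).card with hzdef
  have hzn : z ≤ n := by
    calc z ≤ Finset.univ.card := Finset.card_filter_le _ _
    _ = n := Finset.card_univ.trans (Fintype.card_fin n)
  -- the folded sums
  set E : Fin s → ℕ → ℕ := fun k j => ∑ v ∈ V k, fold p h j (e k v) with hEdef
  have hD : 0 < q1 * p ^ m := Nat.mul_pos hq1 (Nat.pow_pos (by omega))
  have hEdvd : ∀ k ∈ S, ∀ j, q1 ∣ E k j := by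
    intro k hk j
    have h1 : E k j ≡ ∑ v ∈ V k, p ^ j * e k v [MOD q1] :=
      modeq_sum _ _ _ _ fun v _ => fold_modeq p h hp1 (e k v) j
    have h2 : ∑ v ∈ V k, p ^ j * e k v = p ^ j * (q1 * p ^ m) := by
      rw [← Finset.mul_sum, hsum k hk]
    have h3 : E k j ≡ 0 [MOD q1] := by
      rw [h2] at h1
      have : p ^ j * (q1 * p ^ m) ≡ 0 [MOD q1] :=
        Nat.modEq_zero_iff_dvd.mpr ⟨p ^ j * p ^ m, by ring⟩
      exact h1.trans this
    exact Nat.modEq_zero_iff_dvd.mp h3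
  have hEpos : ∀ k ∈ S, ∀ j, 0 < E k j := by
    intro k hk j
    by_contra hcon
    push_neg at hcon
    have hz0 : E k j = 0 := by omega
    have : ∀ v ∈ V k, fold p h j (e k v) = 0 :=
      fun v hv => (Finset.sum_eq_zero_iff).mp hz0 v hv
    have hez : ∀ v ∈ V k, e k v = 0 := by
      intro v hv
      by_contra hev
      exact absurd (this v hv) (fold_pos p h hp1 (Nat.pos_of_ne_zero hev) j).ne'
    have : ∑ v ∈ V k, e k v = 0 := Finset.sum_eq_zero hez
    rw [hsum k hk] at this
    omega
  have hEge : ∀ k ∈ S, ∀ j, q1 ≤ E k j :=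
    fun k hk j => Nat.le_of_dvd (hEpos k hk j) (hEdvd k hk j)
  -- δ
  set δ : Fin s → ℕ → ℕ := fun k j => E k j / q1 - 1 with hδdef
  have hEδ : ∀ k ∈ S, ∀ j, E k j = q1 * (δ k j + 1) := by
    intro k hk j
    have h1 := hEdvd k hk j
    have h2 := hEge k hk j
    have h3 : q1 * (E k j / q1) = E k j := Nat.mul_div_cancel' h1
    have h4 : 1 ≤ E k j / q1 := by
      rw [Nat.le_div_iff_mul_le hq1]; omega
    simp only [hδdef]
    have h5 : E k j / q1 - 1 + 1 = E k j / q1 := by omega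
    rw [h5, h3]
  -- per-rotation degree estimate
  have claim2 : ∀ j, (n : ℤ) - z ≤ ∑ k ∈ S, (d k : ℤ) * (δ k j + 1) := by
    intro j
    have step1 : q1 * (n - z) ≤ ∑ i ∈ Finset.univ.filter (fun i : Fin n => ¬ u i = 0),
        fold p h j (u i) := by
      have hcard : (Finset.univ.filter (fun i : Fin n => ¬ u i = 0)).card = n - z := by
        have hthis := Finset.card_filter_add_card_filter_not
          (s := (Finset.univ : Finset (Fin n))) (p := fun i : Fin n => u i = 0)
        simp only [Finset.card_univ, Fintype.card_fin, ne_eq] at hthis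
        omega
      calc q1 * (n - z) = ∑ _i ∈ Finset.univ.filter (fun i : Fin n => ¬ u i = 0), q1 := by
            rw [Finset.sum_const, hcard, smul_eq_mul, Nat.mul_comm]
      _ ≤ ∑ i ∈ Finset.univ.filter (fun i : Fin n => ¬ u i = 0), fold p h j (u i) := by
            refine Finset.sum_le_sum fun i hi => ?_
            have hui : u i ≠ 0 := (Finset.mem_filter.mp hi).2
            have hpos : 0 < fold p h j (u i) := fold_pos p h hp1 (Nat.pos_of_ne_zero hui) j
            have hdvd' : q1 ∣ fold p h j (u i) := by
              have h1 : fold p h j (u i) ≡ p ^ j * u i [MOD q1] := fold_modeq p h hp1 (u i) j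
              have h2 : p ^ j * u i ≡ 0 [MOD q1] := by
                obtain ⟨c, hc⟩ := hdvd i
                exact Nat.modEq_zero_iff_dvd.mpr ⟨p ^ j * c, by rw [hc]; ring⟩
              exact Nat.modEq_zero_iff_dvd.mp (h1.trans h2)
            exact Nat.le_of_dvd hpos hdvd'
    have step2 : ∑ i ∈ Finset.univ.filter (fun i : Fin n => ¬ u i = 0), fold p h j (u i)
        ≤ ∑ k ∈ S, d k * E k j := by
      calc ∑ i ∈ Finset.univ.filter (fun i : Fin n => ¬ u i = 0), fold p h j (u i)
          ≤ ∑ i : Fin n, fold p h j (u i) :=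
            Finset.sum_le_sum_of_subset (Finset.filter_subset _ _)
      _ ≤ ∑ i : Fin n, ∑ k ∈ S, ∑ v ∈ V k, v i * fold p h j (e k v) := by
          refine Finset.sum_le_sum fun i _ => ?_
          rw [hu i]
          calc fold p h j (∑ k ∈ S, ∑ v ∈ V k, e k v * v i)
              ≤ ∑ k ∈ S, fold p h j (∑ v ∈ V k, e k v * v i) := fold_sum_le h _ _ _
          _ ≤ ∑ k ∈ S, ∑ v ∈ V k, fold p h j (e k v * v i) :=
              Finset.sum_le_sum fun k _ => fold_sum_le h _ _ _
          _ ≤ ∑ k ∈ S, ∑ v ∈ V k, v i * fold p h j (e k v) := by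
              refine Finset.sum_le_sum fun k _ => Finset.sum_le_sum fun v _ => ?_
              rw [Nat.mul_comm (e k v) (v i)]
              exact fold_mul p h hp1 _ _ _
      _ = ∑ k ∈ S, ∑ v ∈ V k, (∑ i : Fin n, v i) * fold p h j (e k v) := by
          rw [Finset.sum_comm]
          refine Finset.sum_congr rfl fun k _ => ?_
          rw [Finset.sum_comm]
          refine Finset.sum_congr rfl fun v _ => ?_
          rw [← Finset.sum_mul]
      _ ≤ ∑ k ∈ S, ∑ v ∈ V k, d k * fold p h j (e k v) := by
          refine Finset.sum_le_sum fun k hk => Finset.sum_le_sum fun v hv => ?_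
          exact Nat.mul_le_mul_right _ (hdeg k hk v hv)
      _ = ∑ k ∈ S, d k * E k j := by
          refine Finset.sum_congr rfl fun k _ => ?_
          rw [hEdef, Finset.mul_sum]
    have step3 : q1 * (n - z) ≤ ∑ k ∈ S, d k * (q1 * (δ k j + 1)) := by
      calc q1 * (n - z) ≤ ∑ k ∈ S, d k * E k j := le_trans step1 step2
      _ = ∑ k ∈ S, d k * (q1 * (δ k j + 1)) :=
          Finset.sum_congr rfl fun k hk => by rw [hEδ k hk j]
    -- cast to ℤ and cancel q1
    have step4 : (q1 : ℤ) * ((n : ℤ) - z) ≤ (q1 : ℤ) * ∑ k ∈ S, (d k : ℤ) * (δ k j + 1) := by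
      have := Int.ofNat_le.mpr step3
      push_cast at this
      push_cast [Nat.cast_sub hzn] at *
      calc (q1 : ℤ) * ((n : ℤ) - z) ≤ ∑ k ∈ S, (d k : ℤ) * ((q1 : ℤ) * ((δ k j : ℤ) + 1)) := by
            convert this using 2
      _ = (q1 : ℤ) * ∑ k ∈ S, (d k : ℤ) * ((δ k j : ℤ) + 1) := by
            rw [Finset.mul_sum]
            refine Finset.sum_congr rfl fun k _ => by ring
    have hq1z : (0 : ℤ) < q1 := by exact_mod_cast hq1
    exact le_of_mul_le_mul_left step4 hq1z
  -- per-rotation bound from minimality of μ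
  have claim3 : ∀ j, (μ : ℤ) ≤ (∑ k ∈ S, (δ k j : ℤ)) + z := by
    intro j
    have h1 : (n : ℤ) - ∑ k, (d k : ℤ) ≤ (dmax : ℤ) * ((∑ k ∈ S, (δ k j : ℤ)) + z) := by
      have h2 : ∑ k ∈ S, (d k : ℤ) * (δ k j + 1) = (∑ k ∈ S, (d k : ℤ) * δ k j) + ∑ k ∈ S, (d k : ℤ) := by
        rw [← Finset.sum_add_distrib]
        refine Finset.sum_congr rfl fun k _ => by ring
      have h3 : ∑ k ∈ S, (d k : ℤ) * δ k j ≤ (dmax : ℤ) * ∑ k ∈ S, (δ k j : ℤ) := by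
        rw [Finset.mul_sum]
        refine Finset.sum_le_sum fun k _ => ?_
        have := hd k
        have hδnn : (0 : ℤ) ≤ δ k j := Int.ofNat_nonneg _
        exact mul_le_mul_of_nonneg_right (by exact_mod_cast this) hδnn
      have h4 : ∑ k ∈ S, (d k : ℤ) ≤ ∑ k, (d k : ℤ) :=
        Finset.sum_le_sum_of_subset_of_nonneg (Finset.subset_univ S)
          (fun k _ _ => Int.ofNat_nonneg _)
      have h5 : (z : ℤ) ≤ (dmax : ℤ) * z := by
        have : (1 : ℤ) ≤ dmax := by exact_mod_cast hdmax
        nlinarith [Int.ofNat_nonneg z]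
      have := claim2 j
      rw [h2] at this
      nlinarith
    have hcast : ((((∑ k ∈ S, δ k j) + z : ℕ)) : ℤ) = (∑ k ∈ S, (δ k j : ℤ)) + z := by
      push_cast; ring
    have h6 : μ ≤ (∑ k ∈ S, δ k j) + z := hμ _ (by rw [hcast]; exact h1)
    calc (μ : ℤ) ≤ (((∑ k ∈ S, δ k j) + z : ℕ) : ℤ) := by exact_mod_cast h6
    _ = (∑ k ∈ S, (δ k j : ℤ)) + z := hcast
  -- exact valuation formula
  have claim4 : ∀ k ∈ S, (padicValNat p (Nat.multinomial (V k) (e k)) : ℤ)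
      = ∑ j ∈ Finset.range h, (δ k j : ℤ) := by
    intro k hk
    have hval := valuation_multinomial (p := p) (V k) (e k)
    rw [hsum k hk] at hval
    have hsd : sdig p (q1 * p ^ m) = h * (p - 1) := by
      rw [sdig_mul_p_pow p hp1, hq1def, sdig_q_sub_one p hp1]
    rw [hsd] at hval
    -- multiply by q1, use sum_fold
    have hsf : ∀ x : ℕ, (q1 : ℤ) * (sdig p x : ℤ)
        = ((p : ℤ) - 1) * ∑ j ∈ Finset.range h, (fold p h j x : ℤ) := by
      intro x
      have := sum_fold p h hp1 hh x
      have hcast := congrArg (fun t : ℕ => (t : ℤ)) this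
      push_cast at hcast
      have hpm1 : ((p : ℤ) - 1) = ((p - 1 : ℕ) : ℤ) := by
        have : 1 ≤ p := by omega
        push_cast [Nat.cast_sub this]
        ring
      have hqm1 : ((q1 : ℤ)) = ((p^h - 1 : ℕ) : ℤ) := by rw [hq1def]
      rw [hpm1, hqm1]
      exact_mod_cast hcast.symm
    have key : (q1 : ℤ) * (((p : ℤ) - 1) * padicValNat p (Nat.multinomial (V k) (e k)))
        = ((p : ℤ) - 1) * ((∑ j ∈ Finset.range h, (E k j : ℤ)) - h * q1) := by
      rw [hval]
      have lhs1 : (q1 : ℤ) * ((∑ v ∈ V k, (sdig p (e k v) : ℤ)) - (h * (p - 1) : ℕ))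
          = (∑ v ∈ V k, (q1 : ℤ) * (sdig p (e k v) : ℤ)) - (q1 : ℤ) * ((h * (p - 1) : ℕ) : ℤ) := by
        rw [mul_sub, Finset.mul_sum]
      rw [lhs1]
      have lhs2 : ∑ v ∈ V k, (q1 : ℤ) * (sdig p (e k v) : ℤ)
          = ((p : ℤ) - 1) * ∑ j ∈ Finset.range h, (E k j : ℤ) := by
        calc ∑ v ∈ V k, (q1 : ℤ) * (sdig p (e k v) : ℤ)
            = ∑ v ∈ V k, ((p : ℤ) - 1) * ∑ j ∈ Finset.range h, (fold p h j (e k v) : ℤ) :=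
              Finset.sum_congr rfl fun v _ => hsf (e k v)
        _ = ((p : ℤ) - 1) * ∑ v ∈ V k, ∑ j ∈ Finset.range h, (fold p h j (e k v) : ℤ) := by
              rw [Finset.mul_sum]
        _ = ((p : ℤ) - 1) * ∑ j ∈ Finset.range h, (E k j : ℤ) := by
              rw [Finset.sum_comm]
              congr 1
              refine Finset.sum_congr rfl fun j _ => ?_
              rw [hEdef]
              push_cast
              ring
      rw [lhs2]
      have hpm1 : (1 : ℤ) ≤ (p : ℤ) := by exact_mod_cast hp1.le
      push_cast [Nat.cast_sub (show 1 ≤ p by omega)]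
      ring
    have hppos : (0 : ℤ) < (p : ℤ) - 1 := by
      have : (1 : ℤ) < p := by exact_mod_cast hp1
      omega
    have hq1pos : (0 : ℤ) < (q1 : ℤ) := by exact_mod_cast hq1
    have key2 : (q1 : ℤ) * (padicValNat p (Nat.multinomial (V k) (e k)) : ℤ)
        = (∑ j ∈ Finset.range h, (E k j : ℤ)) - h * q1 := by
      have := key
      have hrw : (q1 : ℤ) * (((p : ℤ) - 1) * padicValNat p (Nat.multinomial (V k) (e k)))
          = ((p : ℤ) - 1) * ((q1 : ℤ) * padicValNat p (Nat.multinomial (V k) (e k))) := by ring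
      rw [hrw] at this
      exact mul_left_cancel₀ hppos.ne' this
    have key3 : (∑ j ∈ Finset.range h, (E k j : ℤ)) - h * q1
        = (q1 : ℤ) * ∑ j ∈ Finset.range h, (δ k j : ℤ) := by
      have hE' : ∀ j ∈ Finset.range h, (E k j : ℤ) = (q1 : ℤ) * (δ k j : ℤ) + q1 := by
        intro j _
        have h7 : ((E k j : ℕ) : ℤ) = ((q1 * (δ k j + 1) : ℕ) : ℤ) := by
          exact_mod_cast congrArg (fun t : ℕ => (t : ℤ)) (hEδ k hk j)
        push_cast at h7
        linarith
      rw [Finset.sum_congr rfl hE', Finset.sum_add_distrib, Finset.sum_const,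
        Finset.card_range, Finset.mul_sum]
      push_cast
      ring
    rw [key3] at key2
    exact mul_left_cancel₀ hq1pos.ne' key2
  -- conclude
  have final : ∑ k ∈ S, (padicValNat p (Nat.multinomial (V k) (e k)) : ℤ)
      = ∑ j ∈ Finset.range h, ∑ k ∈ S, (δ k j : ℤ) := by
    rw [← Finset.sum_comm]
    exact Finset.sum_congr rfl fun k hk => claim4 k hk
  rw [final]
  have : ∀ j ∈ Finset.range h, (μ : ℤ) - z ≤ ∑ k ∈ S, (δ k j : ℤ) := by
    intro j _
    have := claim3 j
    omega
  calc (h * μ : ℤ) = ∑ _j ∈ Finset.range h, (μ : ℤ) := by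
        rw [Finset.sum_const, Finset.card_range]; push_cast; ring
  _ ≤ ∑ j ∈ Finset.range h, ((∑ k ∈ S, (δ k j : ℤ)) + z) := Finset.sum_le_sum fun j hj => by
        have := claim3 j; omega
  _ = (∑ j ∈ Finset.range h, ∑ k ∈ S, (δ k j : ℤ)) + h * z := by
        rw [Finset.sum_add_distrib, Finset.sum_const, Finset.card_range]
        push_cast
        ring

end Core
end AxKatzAux

namespace AxKatzWitt

open WittVector

variable {p : ℕ} [hp : Fact p.Prime]
variable {K : Type*} [Field K] [CharP K p] [PerfectRing K p]

local notation "W" => WittVector p K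
local notation "π" => (WittVector.constantCoeff : WittVector p K →+* K)

lemma pi_p : π (p : W) = 0 := by
  rw [WittVector.constantCoeff_apply, WittVector.coeff_p_zero]

lemma pi_teich (c : K) : π (WittVector.teichmuller p c) = c := by
  rw [WittVector.constantCoeff_apply, WittVector.teichmuller_coeff_zero]

lemma p_dvd_iff (x : W) : (p : W) ∣ x ↔ π x = 0 := by
  constructor
  · rintro ⟨y, rfl⟩
    rw [map_mul, pi_p, zero_mul]
  · intro hx
    rcases eq_or_ne x 0 with rfl | hx0
    · exact dvd_zero _
    obtain ⟨m, b, hb⟩ := WittVector.exists_eq_pow_p_mul' x hx0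
    rcases Nat.eq_zero_or_pos m with rfl | hm
    · exfalso
      rw [pow_zero, one_mul] at hb
      have : IsUnit (π x) := by
        rw [hb]; exact (π).isUnit_map b.isUnit
      rw [hx] at this
      exact not_isUnit_zero this
    · rw [hb]
      exact Dvd.dvd.mul_right (dvd_pow_self _ hm.ne') _

lemma p_not_unit : ¬ IsUnit (p : W) := by
  intro hu
  have : IsUnit (π (p : W)) := (π).isUnit_map hu
  rw [pi_p] at this
  exact not_isUnit_zero this

/-- transfer of `p`-power divisibility from `W(K)` back to `ℕ`. -/
lemma nat_dvd_of_witt_dvd (c N : ℕ) (hdvd : (p : W) ^ c ∣ (N : W)) : p ^ c ∣ N := by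
  by_contra hcon
  have hN0 : N ≠ 0 := by rintro rfl; exact hcon (dvd_zero _)
  set t := N.factorization p with ht
  have htc : t < c := by
    by_contra hge
    exact hcon (dvd_trans (pow_dvd_pow p (by omega)) (Nat.ordProj_dvd N p))
  have hsplit : p ^ t * (N / p ^ t) = N := Nat.ordProj_mul_ordCompl_eq_self N p
  set M := N / p ^ t with hM
  have hpM : ¬ p ∣ M := Nat.not_dvd_ordCompl hp.out hN0
  have hcast : (N : W) = (p : W) ^ t * (M : W) := by
    rw [← hsplit]; push_cast; ring
  rw [hcast] at hdvd
  have hple : (p : W) ^ t * (p : W) ∣ (p : W) ^ t * (M : W) := by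
    calc (p : W) ^ t * (p : W) = (p : W) ^ (t + 1) := by ring
    _ ∣ (p : W) ^ c := pow_dvd_pow _ (by omega)
    _ ∣ (p : W) ^ t * (M : W) := hdvd
  have hpn0 : (p : W) ^ t ≠ 0 := pow_ne_zero _ (WittVector.p_nonzero p K)
  have hdvdM : (p : W) ∣ (M : W) := (mul_dvd_mul_iff_left hpn0).mp hple
  have hcop : IsCoprime (p : ℤ) (M : ℤ) :=
    Nat.isCoprime_iff_coprime.mpr (hp.out.coprime_iff_not_dvd.mpr hpM)
  obtain ⟨a, b, hab⟩ := hcop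
  have habW : (a : W) * (p : W) + (b : W) * (M : W) = 1 := by
    have := congrArg (fun z : ℤ => (z : W)) hab
    push_cast at this
    exact this
  have : (p : W) ∣ 1 := by
    rw [← habW]
    exact dvd_add (Dvd.dvd.mul_left dvd_rfl _) (Dvd.dvd.mul_left hdvdM _)
  exact p_not_unit (isUnit_of_dvd_one this)

section Finite
variable [Fintype K]

lemma p_dvd_pow_card_sub_one (x : W) (hx : π x ≠ 0) :
    (p : W) ∣ x ^ (Fintype.card K - 1) - 1 := by
  rw [p_dvd_iff, map_sub, map_pow, map_one,
    FiniteField.pow_card_sub_one_eq_one (π x) hx, sub_self]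

/-- `y ≡ 1 mod p^t` implies `y^p ≡ 1 mod p^(t+1)` in a commutative ring. -/
lemma pow_p_step {R : Type*} [CommRing R] {t : ℕ} (ht : 1 ≤ t) {y : R}
    (hy : (p : R) ^ t ∣ y - 1) : (p : R) ^ (t + 1) ∣ y ^ p - 1 := by
  obtain ⟨c, hc⟩ := hy
  have hy' : y = (p : R) ^ t * c + 1 := by linear_combination hc
  rw [hy', add_pow]
  rw [Finset.sum_range_succ' (fun m => ((p:R)^t*c) ^ m * 1 ^ (p - m) * (Nat.choose p m : R)) p]
  have h00 : ((p:R)^t*c) ^ 0 * 1 ^ (p - 0) * (Nat.choose p 0 : R) = 1 := by simp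
  rw [h00, add_sub_cancel_right]
  refine Finset.dvd_sum fun i _ => ?_
  rcases Nat.eq_zero_or_pos i with rfl | hi
  · -- term i = 0 : x^1 * C(p,1) = p^t c * p
    have : ((p:R)^t*c) ^ (0+1) * 1 ^ (p - (0+1)) * (Nat.choose p (0+1) : R)
        = (p : R) ^ (t+1) * c := by
      rw [Nat.choose_one_right]
      push_cast
      ring
    rw [this]
    exact Dvd.dvd.mul_right dvd_rfl _
  · -- terms i ≥ 1 : divisible by p^(t(i+1)) with t(i+1) ≥ t+1
    have hle : t + 1 ≤ t * (i + 1) := by nlinarith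
    have h1 : (p : R) ^ (t + 1) ∣ ((p:R) ^ t) ^ (i+1) := by
      rw [← pow_mul]
      exact pow_dvd_pow _ hle
    have h2 : ((p:R)^t*c) ^ (i+1) * 1 ^ (p - (i+1)) * (Nat.choose p (i+1) : R)
        = ((p:R) ^ t) ^ (i+1) * (c ^ (i+1) * 1 ^ (p - (i+1)) * (Nat.choose p (i+1) : R)) := by
      rw [mul_pow]
      ring
    rw [h2]
    exact Dvd.dvd.mul_right h1 _

lemma pow_p_pow_cong {R : Type*} [CommRing R] (m : ℕ) {y : R}
    (hy : (p : R) ∣ y - 1) : (p : R) ^ (m + 1) ∣ y ^ (p ^ m) - 1 := by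
  induction m with
  | zero => simpa using hy
  | succ m ih =>
    have := pow_p_step (p := p) (t := m + 1) (by omega) ih
    rwa [← pow_mul, ← pow_succ] at this

/-- power sum of Teichmüller representatives: the nonzero, nondivisible case. -/
lemma sum_teich_pow_eq_zero {u : ℕ} (hu : 0 < u)
    (hndvd : ¬ (Fintype.card K - 1) ∣ u) :
    ∑ c : K, (WittVector.teichmuller p c) ^ u = 0 := by
  classical
  obtain ⟨g, hg⟩ := IsCyclic.exists_generator (α := Kˣ)
  have horder : orderOf g = Fintype.card K - 1 := by
    rw [orderOf_eq_card_of_forall_mem_zpowers hg, Nat.card_eq_fintype_card,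
      Fintype.card_units]
  have hgu : (g : K) ^ u ≠ 1 := by
    intro hcon
    apply hndvd
    rw [← horder, orderOf_dvd_iff_pow_eq_one]
    ext
    push_cast
    exact hcon
  set S := ∑ c : K, (WittVector.teichmuller p c) ^ u with hS
  have hgne : (g : K) ≠ 0 := Units.ne_zero g
  have hreindex : ∑ c : K, (WittVector.teichmuller p ((g : K) * c)) ^ u = S := by
    rw [hS]
    exact Equiv.sum_comp (Equiv.mulLeft₀ (g : K) hgne)
      (fun c => (WittVector.teichmuller p c) ^ u)
  have hexpand : ∑ c : K, (WittVector.teichmuller p ((g : K) * c)) ^ u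
      = (WittVector.teichmuller p (g : K)) ^ u * S := by
    rw [hS, Finset.mul_sum]
    refine Finset.sum_congr rfl fun c _ => ?_
    rw [map_mul, mul_pow]
  have hfactor : ((WittVector.teichmuller p (g : K)) ^ u - 1) * S = 0 := by
    rw [sub_mul, one_mul, ← hexpand, hreindex, sub_self]
  rcases mul_eq_zero.mp hfactor with h0 | h0
  · exfalso
    apply hgu
    have : π ((WittVector.teichmuller p (g : K)) ^ u) = π 1 := by
      have : (WittVector.teichmuller p (g : K)) ^ u = 1 := by
        have := sub_eq_zero.mp h0
        exact this
      rw [this]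
    rw [map_pow, pi_teich, map_one] at this
    exact this
  · exact h0

/-- power sum of Teichmüller representatives: positive exponent divisible by `q - 1`. -/
lemma sum_teich_pow_eq_card_sub_one {u : ℕ} (hu : 0 < u)
    (hdvd : (Fintype.card K - 1) ∣ u) :
    ∑ c : K, (WittVector.teichmuller p c) ^ u = ((Fintype.card K - 1 : ℕ) : WittVector p K) := by
  classical
  have h0 : (WittVector.teichmuller p (0 : K)) ^ u = 0 := by
    rw [WittVector.teichmuller_zero, zero_pow hu.ne']
  rw [← Finset.sum_erase_add Finset.univ _ (Finset.mem_univ (0 : K)), h0, add_zero]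
  have hone : ∀ c ∈ Finset.univ.erase (0 : K), (WittVector.teichmuller p c) ^ u = 1 := by
    intro c hc
    have hcne : c ≠ 0 := Finset.ne_of_mem_erase hc
    obtain ⟨e, rfl⟩ := hdvd
    rw [← map_pow, pow_mul, FiniteField.pow_card_sub_one_eq_one c hcne, one_pow, map_one]
  rw [Finset.sum_congr rfl hone, Finset.sum_const, Finset.card_erase_of_mem (Finset.mem_univ _),
    Finset.card_univ, nsmul_eq_mul, mul_one]

lemma sum_teich_pow_zero :
    ∑ c : K, (WittVector.teichmuller p c) ^ (0 : ℕ)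
      = ((Fintype.card K : ℕ) : WittVector p K) := by
  simp [Finset.card_univ]

end Finite


end AxKatzWitt

namespace AxKatzMain

open WittVector MvPolynomial AxKatzAux AxKatzWitt

variable {p h : ℕ} [hp : Fact p.Prime]
variable {K : Type*} [Field K] [CharP K p] [PerfectRing K p] [Fintype K]

local notation "𝕎" => WittVector p K

/-- product of monomials is a monomial -/
lemma prod_monomial {ι σ R : Type*} [CommSemiring R] (s : Finset ι) (g : ι → (σ →₀ ℕ))
    (c : ι → R) :
    ∏ x ∈ s, MvPolynomial.monomial (g x) (c x)
      = MvPolynomial.monomial (∑ x ∈ s, g x) (∏ x ∈ s, c x) := by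
  classical
  induction s using Finset.cons_induction with
  | empty => simp
  | cons a s ha ih =>
    rw [Finset.prod_cons, Finset.sum_cons, Finset.prod_cons, ih, MvPolynomial.monomial_mul]

lemma x_dvd_prod_sub_one {R ι : Type*} [CommRing R] (x : R) (t : Finset ι) (B : ι → R)
    (hB : ∀ i ∈ t, x ∣ B i - 1) : x ∣ (∏ i ∈ t, B i) - 1 := by
  classical
  induction t using Finset.cons_induction with
  | empty => simp
  | cons a t ha ih =>
    rw [Finset.prod_cons]
    have h1 : B a * (∏ i ∈ t, B i) - 1
        = B a * ((∏ i ∈ t, B i) - 1) + (B a - 1) := by ring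
    rw [h1]
    exact dvd_add (Dvd.dvd.mul_left (ih fun i hi => hB i (Finset.mem_cons_of_mem hi)) _)
      (hB a (Finset.mem_cons_self _ _))

/-- multinomial-theorem expansion of a power of a multivariate polynomial. -/
lemma pow_expand {σ R : Type*} [CommSemiring R] [DecidableEq σ] (F : MvPolynomial σ R) (D : ℕ) :
    F ^ D = ∑ e ∈ (F.support).piAntidiag D,
      MvPolynomial.monomial (∑ w ∈ F.support, e w • w)
        ((Nat.multinomial F.support e : R) * ∏ w ∈ F.support, F.coeff w ^ e w) := by
  classical
  conv_lhs => rw [← MvPolynomial.support_sum_monomial_coeff F]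
  rw [Finset.sum_pow_eq_sum_piAntidiag]
  refine Finset.sum_congr rfl fun e _ => ?_
  have h1 : ∏ w ∈ F.support, (MvPolynomial.monomial w (F.coeff w)) ^ e w
      = MvPolynomial.monomial (∑ w ∈ F.support, e w • w)
          (∏ w ∈ F.support, F.coeff w ^ e w) := by
    rw [← prod_monomial]
    refine Finset.prod_congr rfl fun w _ => ?_
    rw [MvPolynomial.monomial_pow]
  rw [h1]
  rw [show ((Nat.multinomial F.support e : MvPolynomial σ R))
      = MvPolynomial.C ((Nat.multinomial F.support e : R)) by
    rw [map_natCast (MvPolynomial.C : R →+* MvPolynomial σ R)]]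
  rw [MvPolynomial.C_mul_monomial]

set_option maxHeartbeats 3000000

/-- summing a polynomial evaluated at all tuples of Teichmüller lifts -/
lemma sum_eval_teich {n : ℕ} (g : MvPolynomial (Fin n) 𝕎) :
    ∑ y : Fin n → K, MvPolynomial.eval (fun i => WittVector.teichmuller p (y i)) g
      = ∑ v ∈ g.support, MvPolynomial.coeff v g *
          ∏ i : Fin n, (∑ c : K, (WittVector.teichmuller p c) ^ v i) := by
  classical
  have h1 : ∀ y : Fin n → K, MvPolynomial.eval (fun i => WittVector.teichmuller p (y i)) g
      = ∑ v ∈ g.support, MvPolynomial.coeff v g *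
          ∏ i : Fin n, (WittVector.teichmuller p (y i)) ^ v i :=
    fun y => MvPolynomial.eval_eq' _ g
  rw [Finset.sum_congr rfl fun y _ => h1 y, Finset.sum_comm]
  refine Finset.sum_congr rfl fun v _ => ?_
  rw [← Finset.mul_sum]
  congr 1
  rw [Finset.prod_univ_sum (fun _ => (Finset.univ : Finset K))
    (fun i c => (WittVector.teichmuller p c) ^ v i)]
  rw [Fintype.piFinset_univ]

theorem key_count {n s : ℕ} (hh : 0 < h) (hcard : Fintype.card K = p ^ h)
    (f : Fin s → MvPolynomial (Fin n) 𝕎)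
    (d : Fin s → ℕ) (hdeg : ∀ k, (f k).totalDegree ≤ d k)
    (dmax : ℕ) (hdm : ∀ k, d k ≤ dmax) (hdmax : 0 < dmax)
    (μ : ℕ) (hμ : ∀ t : ℕ, (n : ℤ) - ∑ k, (d k : ℤ) ≤ (dmax : ℤ) * t → μ ≤ t) :
    (p : ℕ) ^ (h * μ) ∣ Nat.card {y : Fin n → K //
      ∀ k, (p : 𝕎) ∣ MvPolynomial.eval (fun i => WittVector.teichmuller p (y i)) (f k)} := by
  classical
  have hp1 : 1 < p := hp.out.one_lt
  have hq2 : 2 ≤ p ^ h := by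
    have h1 : p ^ 1 ≤ p ^ h := Nat.pow_le_pow_right (by omega) hh
    have h2 : p ^ 1 = p := pow_one p
    omega
  set m := h * μ with hm
  set D := (p ^ h - 1) * p ^ m with hDdef
  have hmD : m + 1 ≤ D := by
    have h1 : m < p ^ m := Nat.lt_pow_self hp1
    have h2 : 1 * p ^ m ≤ (p ^ h - 1) * p ^ m := Nat.mul_le_mul_right _ (by omega)
    omega
  set A : (Fin n → K) → Fin s → 𝕎 :=
    fun y k => MvPolynomial.eval (fun i => WittVector.teichmuller p (y i)) (f k) with hA
  set P : (Fin n → K) → Prop := fun y => ∀ k, (p : 𝕎) ∣ A y k with hP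
  set N := Nat.card {y : Fin n → K // P y} with hN
  set T : 𝕎 := ∑ y : Fin n → K, ∏ k : Fin s, (1 - (A y k) ^ D) with hT
  -- Step 1 : T ≡ N mod p^(m+1)
  have step1 : (p : 𝕎) ^ (m + 1) ∣ T - (N : 𝕎) := by
    have hNcard : N = (Finset.univ.filter P).card := by
      rw [hN, Nat.card_eq_fintype_card, Fintype.card_subtype]
    have hNsum : (N : 𝕎) = ∑ y : Fin n → K, (if P y then (1 : 𝕎) else 0) := by
      rw [hNcard, Finset.card_filter]
      push_cast
      refine Finset.sum_congr rfl fun y _ => ?_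
      split <;> simp
    rw [hT, hNsum, ← Finset.sum_sub_distrib]
    refine Finset.dvd_sum fun y _ => ?_
    by_cases hy : P y
    · rw [if_pos hy]
      refine x_dvd_prod_sub_one _ _ _ fun k _ => ?_
      have h1 : (p : 𝕎) ^ D ∣ (A y k) ^ D := pow_dvd_pow_of_dvd (hy k) D
      have h2 : (p : 𝕎) ^ (m + 1) ∣ (A y k) ^ D := dvd_trans (pow_dvd_pow _ hmD) h1
      have h3 : (1 - (A y k) ^ D) - 1 = -((A y k) ^ D) := by ring
      rw [h3]
      exact Dvd.dvd.neg_right h2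
    · rw [if_neg hy]
      have hy' : ∃ k, ¬ (p : 𝕎) ∣ A y k := by
        by_contra hcon
        push_neg at hcon
        exact hy fun k => hcon k
      obtain ⟨k0, hk0⟩ := hy' 
      have hpi : WittVector.constantCoeff (A y k0) ≠ 0 :=
        fun hc => hk0 ((p_dvd_iff _).mpr hc)
      have h1 : (p : 𝕎) ∣ (A y k0) ^ (Fintype.card K - 1) - 1 :=
        p_dvd_pow_card_sub_one _ hpi
      have h2 : (p : 𝕎) ^ (m + 1) ∣ ((A y k0) ^ (Fintype.card K - 1)) ^ (p ^ m) - 1 :=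
        pow_p_pow_cong m h1
      have h3 : ((A y k0) ^ (Fintype.card K - 1)) ^ (p ^ m) = (A y k0) ^ D := by
        rw [← pow_mul, hcard, hDdef]
      have h4 : (p : 𝕎) ^ (m + 1) ∣ 1 - (A y k0) ^ D := by
        have h5 : (1 : 𝕎) - (A y k0) ^ D = -((A y k0) ^ D - 1) := by ring
        rw [h5, ← h3]
        exact Dvd.dvd.neg_right h2
      have h5 : (1 - (A y k0) ^ D) ∣ ∏ k : Fin s, (1 - (A y k) ^ D) :=
        Finset.dvd_prod_of_mem _ (Finset.mem_univ k0)
      rw [sub_zero]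
      exact dvd_trans h4 h5
  -- Step 2 : p^(h μ) ∣ T
  have step2 : (p : 𝕎) ^ (h * μ) ∣ T := by
    have expand : ∀ y : Fin n → K, ∏ k : Fin s, (1 - (A y k) ^ D)
        = ∑ t ∈ (Finset.univ : Finset (Fin s)).powerset, ∏ k ∈ t, (-((A y k) ^ D)) := by
      intro y
      have h1 : ∀ k : Fin s, (1 : 𝕎) - (A y k) ^ D = (-((A y k) ^ D)) + 1 := fun k => by ring
      rw [Finset.prod_congr rfl fun k _ => h1 k, Finset.prod_add]
      exact Finset.sum_congr rfl fun t _ => by rw [Finset.prod_const_one, mul_one]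
    rw [hT, Finset.sum_congr rfl fun y (_ : y ∈ Finset.univ) => expand y, Finset.sum_comm]
    refine Finset.dvd_sum fun t _ => ?_
    have hsign : ∀ y : Fin n → K, ∏ k ∈ t, (-((A y k) ^ D))
        = (-1 : 𝕎) ^ t.card * ∏ k ∈ t, (A y k) ^ D := by
      intro y
      calc ∏ k ∈ t, (-((A y k) ^ D)) = ∏ k ∈ t, ((-1) * (A y k) ^ D) :=
            Finset.prod_congr rfl fun k _ => by ring
      _ = (∏ _k ∈ t, (-1 : 𝕎)) * ∏ k ∈ t, (A y k) ^ D := Finset.prod_mul_distrib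
      _ = (-1 : 𝕎) ^ t.card * ∏ k ∈ t, (A y k) ^ D := by rw [Finset.prod_const]
    rw [Finset.sum_congr rfl fun y (_ : y ∈ Finset.univ) => hsign y, ← Finset.mul_sum]
    refine Dvd.dvd.mul_left ?_ _
    -- reduce to the coefficientwise estimate for g = ∏_{k ∈ t} (f k)^D
    set g : MvPolynomial (Fin n) 𝕎 := ∏ k ∈ t, (f k) ^ D with hg
    have hAg : ∀ y : Fin n → K, ∏ k ∈ t, (A y k) ^ D
        = MvPolynomial.eval (fun i => WittVector.teichmuller p (y i)) g := by
      intro y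
      rw [hg, map_prod]
      exact Finset.prod_congr rfl fun k _ => by rw [map_pow, hA]
    rw [Finset.sum_congr rfl fun y (_ : y ∈ Finset.univ) => hAg y, sum_eval_teich]
    refine Finset.dvd_sum fun v hv => ?_
    by_cases hvd : ∀ i, (p ^ h - 1) ∣ v i
    · -- main case
      set z := (Finset.univ.filter (fun i : Fin n => v i = 0)).card with hz
      -- 2a : the Teichmüller power sums contribute p^(h z)
      have h2a : (p : 𝕎) ^ (h * z) ∣
          ∏ i : Fin n, (∑ c : K, (WittVector.teichmuller p c) ^ v i) := by
        rw [← Finset.prod_filter_mul_prod_filter_not Finset.univ (fun i : Fin n => v i = 0)]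
        refine Dvd.dvd.mul_right ?_ _
        have hconst : ∀ i ∈ Finset.univ.filter (fun i : Fin n => v i = 0),
            (∑ c : K, (WittVector.teichmuller p c) ^ v i) = ((p ^ h : ℕ) : 𝕎) := by
          intro i hi
          have hvi : v i = 0 := (Finset.mem_filter.mp hi).2
          rw [hvi, sum_teich_pow_zero, hcard]
        rw [Finset.prod_congr rfl hconst, Finset.prod_const, ← hz]
        have hcast : (((p ^ h : ℕ) : 𝕎)) ^ z = (p : 𝕎) ^ (h * z) := by
          push_cast
          rw [← pow_mul]
        rw [hcast]
      -- 2b : the coefficient of v in g is divisible by p^(h μ - h z)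
      have h2b : (p : 𝕎) ^ (h * μ - h * z) ∣ MvPolynomial.coeff v g := by
        have hgexp : g = ∑ E ∈ t.pi (fun k => ((f k).support).piAntidiag D),
            MvPolynomial.monomial
              (∑ x ∈ t.attach, ∑ w ∈ (f x.1).support, E x.1 x.2 w • w)
              (∏ x ∈ t.attach, ((Nat.multinomial (f x.1).support (E x.1 x.2) : 𝕎) *
                ∏ w ∈ (f x.1).support, (f x.1).coeff w ^ (E x.1 x.2) w)) := by
          rw [hg, Finset.prod_congr rfl fun k (_ : k ∈ t) => pow_expand (f k) D,
            Finset.prod_sum]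
          exact Finset.sum_congr rfl fun E hE => prod_monomial _ _ _
        rw [hgexp, MvPolynomial.coeff_sum]
        refine Finset.dvd_sum fun E hE => ?_
        rw [MvPolynomial.coeff_monomial]
        by_cases hUv : (∑ x ∈ t.attach, ∑ w ∈ (f x.1).support, E x.1 x.2 w • w) = v
        swap
        · rw [if_neg hUv]
          exact dvd_zero _
        rw [if_pos hUv]
        -- set up the data for the core estimate
        set e : Fin s → (Fin n →₀ ℕ) → ℕ :=
          fun k w => if hk : k ∈ t then E k hk w else 0 with he
        have hee : ∀ (k) (hk : k ∈ t) (w), e k w = E k hk w := by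
          intro k hk w
          rw [he]
          simp only [dif_pos hk]
        have hEmem : ∀ (k) (hk : k ∈ t), E k hk ∈ ((f k).support).piAntidiag D :=
          fun k hk => Finset.mem_pi.mp hE k hk
        have hsum : ∀ k ∈ t, ∑ w ∈ (f k).support, e k w = (p ^ h - 1) * p ^ m := by
          intro k hk
          have h1 := (Finset.mem_piAntidiag.mp (hEmem k hk)).1
          rw [← hDdef, ← h1]
          exact Finset.sum_congr rfl fun w _ => hee k hk w
        have hdeg' : ∀ k ∈ t, ∀ w ∈ (f k).support, (∑ i, w i) ≤ d k := by
          intro k _ w hw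
          have h1 : (w.sum fun _ e => e) ≤ (f k).totalDegree :=
            MvPolynomial.le_totalDegree hw
          have h2 : (w.sum fun _ e => e) = ∑ i, w i :=
            Finsupp.sum_fintype _ _ fun i => rfl
          rw [← h2]
          exact h1.trans (hdeg k)
        have hu : ∀ i, v i = ∑ k ∈ t, ∑ w ∈ (f k).support, e k w * w i := by
          intro i
          have h1 : ((∑ x ∈ t.attach, ∑ w ∈ (f x.1).support, E x.1 x.2 w • w) : Fin n →₀ ℕ) i
              = ∑ x ∈ t.attach, ∑ w ∈ (f x.1).support, E x.1 x.2 w * w i := by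
            rw [Finset.sum_apply']
            refine Finset.sum_congr rfl fun x _ => ?_
            rw [Finset.sum_apply']
            exact Finset.sum_congr rfl fun w _ => by
              rw [Finsupp.smul_apply, smul_eq_mul]
          have h2 : ∑ x ∈ t.attach, ∑ w ∈ (f x.1).support, E x.1 x.2 w * w i
              = ∑ k ∈ t, ∑ w ∈ (f k).support, e k w * w i := by
            rw [← Finset.sum_attach t (fun k => ∑ w ∈ (f k).support, e k w * w i)]
            refine Finset.sum_congr rfl fun x _ => ?_
            exact Finset.sum_congr rfl fun w _ => by rw [hee x.1 x.2 w]
          rw [← hUv, h1, h2]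
        have core := core_estimate (p := p) hh t (fun k => (f k).support) d dmax hdm hdmax
          e hsum hdeg' (fun i => v i) hu hvd μ hμ
        -- convert to a ℕ inequality
        have hcore : h * μ - h * z ≤ ∑ k ∈ t, padicValNat p (Nat.multinomial (f k).support (e k)) := by
          have h1 : (∑ k ∈ t, (padicValNat p (Nat.multinomial (f k).support (e k)) : ℤ))
              = ((∑ k ∈ t, padicValNat p (Nat.multinomial (f k).support (e k)) : ℕ) : ℤ) := by
            push_cast
            rfl
          rw [h1] at core
          beta_reduce at core
          rw [← hz] at core
          omega
        -- now produce the divisibility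
        have hdvdnat : p ^ (h * μ - h * z) ∣
            ∏ k ∈ t, Nat.multinomial (f k).support (e k) := by
          calc p ^ (h * μ - h * z)
              ∣ p ^ (∑ k ∈ t, padicValNat p (Nat.multinomial (f k).support (e k))) :=
                pow_dvd_pow _ hcore
          _ = ∏ k ∈ t, p ^ padicValNat p (Nat.multinomial (f k).support (e k)) :=
                (Finset.prod_pow_eq_pow_sum _ _ _).symm
          _ ∣ ∏ k ∈ t, Nat.multinomial (f k).support (e k) :=
                Finset.prod_dvd_prod_of_dvd _ _ fun k _ => pow_padicValNat_dvd
        have hprodW : ((∏ k ∈ t, Nat.multinomial (f k).support (e k) : ℕ) : 𝕎) ∣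
            ∏ x ∈ t.attach, ((Nat.multinomial (f x.1).support (E x.1 x.2) : 𝕎) *
                ∏ w ∈ (f x.1).support, (f x.1).coeff w ^ (E x.1 x.2) w) := by
          rw [Finset.prod_mul_distrib]
          refine Dvd.dvd.mul_right (dvd_of_eq ?_) _
          push_cast
          rw [← Finset.prod_attach t (fun k => ((Nat.multinomial (f k).support (e k) : ℕ) : 𝕎))]
          refine Finset.prod_congr rfl fun x _ => ?_
          congr 1
          exact Nat.multinomial_congr fun w _ => hee x.1 x.2 w
        calc (p : 𝕎) ^ (h * μ - h * z)
            = (((p : ℕ) ^ (h * μ - h * z) : ℕ) : 𝕎) := by push_cast; rfl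
        _ ∣ ((∏ k ∈ t, Nat.multinomial (f k).support (e k) : ℕ) : 𝕎) :=
              Nat.cast_dvd_cast hdvdnat
        _ ∣ _ := hprodW
      have hcombine := mul_dvd_mul h2b h2a
      rw [← pow_add] at hcombine
      exact dvd_trans (pow_dvd_pow _ (by omega : h * μ ≤ (h * μ - h * z) + h * z)) hcombine
    · -- degenerate case : some Teichmüller power sum vanishes
      push_neg at hvd
      obtain ⟨i, hi⟩ := hvd
      have hvi : 0 < v i := by
        rcases Nat.eq_zero_or_pos (v i) with h0 | h0
        · exact absurd (h0 ▸ dvd_zero _) hi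
        · exact h0
      have hz : (∑ c : K, (WittVector.teichmuller p c) ^ v i) = 0 := by
        refine sum_teich_pow_eq_zero hvi ?_
        rw [hcard]
        exact hi
      rw [Finset.prod_eq_zero (Finset.mem_univ i) hz, mul_zero]
      exact dvd_zero _
  -- conclude
  have hfinal : (p : 𝕎) ^ (h * μ) ∣ (N : 𝕎) := by
    have h1 : (p : 𝕎) ^ (h * μ) ∣ T - (N : 𝕎) :=
      dvd_trans (pow_dvd_pow _ (by omega : h * μ ≤ m + 1)) step1
    have h2 := dvd_sub step2 h1
    simpa using h2
  exact nat_dvd_of_witt_dvd _ _ hfinal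

end AxKatzMain

section Final

open WittVector MvPolynomial AxKatzWitt AxKatzMain

set_option maxHeartbeats 3000000 in
/-- Ax–Katz over boxes: for a box `𝓑₁ ⊆ ℤ_q^n` (`ℤ_q ≅ W(𝔽_q)`, `q = p^h`) with `q^n`
elements reducing onto `𝔽_q^n`, and nonconstant `f₁,…,f_s ∈ ℤ_q[x₁,…,x_n]`,
`V = {X ∈ 𝓑₁ : f_k(X) ≡ 0 mod p ∀k}` satisfies
`ord_q(|V|) ≥ ⌈(n − Σ_k deg f_k)/max_k deg f_k⌉*`, i.e. `q^⌈…⌉* ∣ |V|`. -/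
theorem ax_katz_over_boxes (p h n s : ℕ) [Fact p.Prime] (hh : 0 < h) (hs : 0 < s)
    (B : Set (Fin n → WittVector p (GaloisField p h)))
    (hBcard : Nat.card B = (p ^ h) ^ n)
    (hBsurj : ∀ z : Fin n → WittVector p (GaloisField p h),
      ∃ x ∈ B, ∀ j, (p : WittVector p (GaloisField p h)) ∣ x j - z j)
    (f : Fin s → MvPolynomial (Fin n) (WittVector p (GaloisField p h)))
    (hf : ∀ k, 0 < (f k).totalDegree) :
    (p ^ h) ^
        ⌈(((n : ℚ) - ∑ k, ((f k).totalDegree : ℚ)) /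
            ((Finset.univ.sup fun k => (f k).totalDegree : ℕ) : ℚ))⌉₊ ∣
      Nat.card {X : Fin n → WittVector p (GaloisField p h) | X ∈ B ∧
        ∀ k : Fin s, (p : WittVector p (GaloisField p h)) ∣ MvPolynomial.eval X (f k)} := by
  classical
  have hp1 : 1 < p := (Fact.out : p.Prime).one_lt
  letI : Fintype (GaloisField p h) := Fintype.ofFinite _
  have hcard : Fintype.card (GaloisField p h) = p ^ h := by
    rw [← Nat.card_eq_fintype_card, GaloisField.card p h hh.ne']
  set d : Fin s → ℕ := fun k => (f k).totalDegree with hd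
  set dmax : ℕ := Finset.univ.sup fun k => (f k).totalDegree with hdmax'
  have hdm : ∀ k, d k ≤ dmax := fun k => Finset.le_sup (Finset.mem_univ k)
  have hdmax : 0 < dmax := lt_of_lt_of_le (hf ⟨0, hs⟩) (hdm ⟨0, hs⟩)
  set μ : ℕ := ⌈(((n : ℚ) - ∑ k, ((f k).totalDegree : ℚ)) / (dmax : ℚ))⌉₊ with hμdef
  have hμ : ∀ t : ℕ, (n : ℤ) - ∑ k, (d k : ℤ) ≤ (dmax : ℤ) * t → μ ≤ t := by
    intro t ht
    rw [hμdef, Nat.ceil_le, div_le_iff₀ (by exact_mod_cast hdmax : (0 : ℚ) < dmax)]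
    have hq : ((n : ℚ) - ∑ k, (d k : ℚ)) ≤ (dmax : ℚ) * t := by exact_mod_cast ht
    simp only [hd] at hq
    linarith
  -- the Witt-level counting theorem
  have hkey := key_count (p := p) (h := h) (K := GaloisField p h) hh hcard f d
    (fun k => le_refl _) dmax hdm hdmax μ hμ
  -- identify the two counts
  have evalφ : ∀ (X : Fin n → WittVector p (GaloisField p h)) (k : Fin s),
      WittVector.constantCoeff (MvPolynomial.eval X (f k))
        = MvPolynomial.eval₂ WittVector.constantCoeff
            (fun i => WittVector.constantCoeff (X i)) (f k) := by
    intro X k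
    have h1 := MvPolynomial.eval₂_comp_left
      (WittVector.constantCoeff : WittVector p (GaloisField p h) →+* GaloisField p h)
      (RingHom.id (WittVector p (GaloisField p h))) X (f k)
    rw [RingHom.comp_id] at h1
    exact h1
  have hpred : ∀ X : Fin n → WittVector p (GaloisField p h),
      (∀ k, (p : WittVector p (GaloisField p h)) ∣ MvPolynomial.eval X (f k)) ↔
      (∀ k, (p : WittVector p (GaloisField p h)) ∣ MvPolynomial.eval
        (fun i => WittVector.teichmuller p (WittVector.constantCoeff (X i))) (f k)) := by
    intro X
    have hfun : (fun i => WittVector.constantCoeff (X i))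
        = fun i => WittVector.constantCoeff
            (WittVector.teichmuller p (WittVector.constantCoeff (X i))) := by
      funext i
      rw [pi_teich]
    have hsame : ∀ k, WittVector.constantCoeff (MvPolynomial.eval X (f k))
        = WittVector.constantCoeff (MvPolynomial.eval
            (fun i => WittVector.teichmuller p (WittVector.constantCoeff (X i))) (f k)) := by
      intro k
      rw [evalφ, evalφ, ← hfun]
    exact forall_congr' fun k => by rw [p_dvd_iff, p_dvd_iff, hsame k]
  -- B is finite and maps bijectively onto (Fin n → K)
  have hBfin : Finite B := by
    refine Nat.finite_of_card_ne_zero ?_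
    rw [hBcard]
    positivity
  set Φ : B → (Fin n → GaloisField p h) := fun b i => WittVector.constantCoeff (b.1 i) with hΦ
  have hsurj : Function.Surjective Φ := by
    intro y
    obtain ⟨x, hxB, hx⟩ := hBsurj (fun j => WittVector.teichmuller p (y j))
    refine ⟨⟨x, hxB⟩, ?_⟩
    funext j
    have h1 : WittVector.constantCoeff (x j - WittVector.teichmuller p (y j)) = 0 :=
      (p_dvd_iff _).mp (hx j)
    rw [map_sub, sub_eq_zero] at h1
    show WittVector.constantCoeff (x j) = y j
    rw [h1, pi_teich]
  have hcards : Nat.card B = Nat.card (Fin n → GaloisField p h) := by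
    rw [hBcard, Nat.card_fun, Nat.card_eq_fintype_card (α := GaloisField p h), hcard,
      Nat.card_eq_fintype_card (α := Fin n), Fintype.card_fin]
  have hbij : Function.Bijective Φ :=
    (Nat.bijective_iff_surjective_and_card Φ).mpr ⟨hsurj, hcards⟩
  -- transport the count
  have hcount : Nat.card {X : Fin n → WittVector p (GaloisField p h) | X ∈ B ∧
        ∀ k : Fin s, (p : WittVector p (GaloisField p h)) ∣ MvPolynomial.eval X (f k)}
      = Nat.card {y : Fin n → GaloisField p h //
        ∀ k, (p : WittVector p (GaloisField p h)) ∣ MvPolynomial.eval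
          (fun i => WittVector.teichmuller p (y i)) (f k)} := by
    refine Nat.card_congr (Equiv.trans ?_ (Equiv.trans
      ((Equiv.subtypeSubtypeEquivSubtypeInter (· ∈ B)
        (fun X => ∀ k, (p : WittVector p (GaloisField p h)) ∣
          MvPolynomial.eval X (f k))).symm) ?_))
    · exact Equiv.subtypeEquivRight fun X => by simp [Set.mem_setOf_eq]
    · refine Equiv.subtypeEquiv (Equiv.ofBijective Φ hbij) fun b => ?_
      exact hpred b.1
  rw [hcount]
  have hexp : (p ^ h) ^ μ = p ^ (h * μ) := by rw [← pow_mul]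
  rw [hexp]
  exact hkey

end Final
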